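/- Let S be an integral domain with fraction field K and L a splitting field of the product of monic polynomials g_(1),...,g_(n) in S[X] of degrees m_(1),...,m_(n) ≥ 1. Write g_(k)(X) = ∏_{i∈[1,m_(k)]} (X - γ_(k)i) in L[X]. Define Res(g_(1),...,g_(n)) as the determinant of the M×M matrix A (M = m_(1)+...+m_(n)) whose block of m_(k) rows consists of shifted coefficient rows of ∏_{j≠k} g_(j)(X). Then Res(g_(1),...,g_(n)) = ∏_{1≤k<ℓ≤n} ∏_{(i,j)∈[1,m_(k)]×[1,m_(ℓ)]} (γ_(k)i − γ_(ℓ)j). -/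

import Mathlib

open Polynomial Finset

/-- The global column position of an index in the block-structured resultant matrix. -/
def resPos {n : ℕ} {m : Fin n → ℕ} (q : (k : Fin n) × Fin (m k)) : ℕ :=
  (∑ j ∈ Finset.univ.filter (fun j => j < q.1), m j) + (q.2 : ℕ)

/-- The matrix `A(g_(1), …, g_(n))` whose block of `deg g_(k)` rows consists of the
successively shifted coefficient rows of `∏_{j ≠ k} g_(j)`. -/
noncomputable def resMatrix {R : Type*} [CommRing R] {n : ℕ} (g : Fin n → Polynomial R) :
    Matrix ((k : Fin n) × Fin ((g k).natDegree)) ((k : Fin n) × Fin ((g k).natDegree)) R :=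
  fun p q =>
    if (p.2 : ℕ) ≤ resPos q then
      (∏ j ∈ Finset.univ.erase p.1, g j).coeff (resPos q - (p.2 : ℕ))
    else 0

/-- The generalized resultant `Res(g_(1), …, g_(n)) = det A(g_(1), …, g_(n))`. -/
noncomputable def genRes {R : Type*} [CommRing R] {n : ℕ} (g : Fin n → Polynomial R) : R :=
  (resMatrix g).det

namespace ResAux

variable {n : ℕ} {m : Fin n → ℕ}

/-- lexicographic strict order on the index type -/
def lexLT (p q : (k : Fin n) × Fin (m k)) : Prop :=
  p.1 < q.1 ∨ (p.1 = q.1 ∧ (p.2 : ℕ) < (q.2 : ℕ))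

instance lexLT.decidable (p q : (k : Fin n) × Fin (m k)) : Decidable (lexLT p q) :=
  inferInstanceAs (Decidable (_ ∨ _))

lemma resPos_lt (q : (k : Fin n) × Fin (m k)) : resPos q < ∑ k, m k := by
  have h1 : resPos q < ∑ j ∈ Finset.univ.filter (fun j => j ≤ q.1), m j := by
    have : Finset.univ.filter (fun j => j ≤ q.1)
        = insert q.1 (Finset.univ.filter (fun j => j < q.1)) := by
      ext x; simp [le_iff_lt_or_eq, or_comm, eq_comm]
    rw [this, Finset.sum_insert (by simp)]
    have := q.2.isLt
    unfold resPos; omega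
  exact lt_of_lt_of_le h1 (Finset.sum_le_sum_of_subset (Finset.filter_subset _ _))

lemma resPos_lt_of_lexLT {p q : (k : Fin n) × Fin (m k)} (h : lexLT p q) :
    resPos p < resPos q := by
  rcases h with h | ⟨h1, h2⟩
  · have h1 : resPos p < ∑ j ∈ Finset.univ.filter (fun j => j ≤ p.1), m j := by
      have : Finset.univ.filter (fun j => j ≤ p.1)
          = insert p.1 (Finset.univ.filter (fun j => j < p.1)) := by
        ext x; simp [le_iff_lt_or_eq, or_comm, eq_comm]
      rw [this, Finset.sum_insert (by simp)]
      have := p.2.isLt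
      unfold resPos; omega
    have h2 : ∑ j ∈ Finset.univ.filter (fun j => j ≤ p.1), m j
        ≤ ∑ j ∈ Finset.univ.filter (fun j => j < q.1), m j := by
      apply Finset.sum_le_sum_of_subset
      intro x; simp only [Finset.mem_filter, Finset.mem_univ, true_and]
      exact fun hx => lt_of_le_of_lt hx h
    have : resPos q = ∑ j ∈ Finset.univ.filter (fun j => j < q.1), m j + (q.2 : ℕ) := rfl
    omega
  · obtain ⟨k, i⟩ := p; obtain ⟨l, j⟩ := q
    dsimp at h1; subst h1
    dsimp at h2
    exact Nat.add_lt_add_left h2 _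

lemma lexLT_trichotomy (p q : (k : Fin n) × Fin (m k)) :
    lexLT p q ∨ p = q ∨ lexLT q p := by
  obtain ⟨k, i⟩ := p; obtain ⟨l, j⟩ := q
  rcases lt_trichotomy k l with h | h | h
  · exact Or.inl (Or.inl h)
  · subst h
    rcases lt_trichotomy (i : ℕ) (j : ℕ) with h | h | h
    · exact Or.inl (Or.inr ⟨rfl, h⟩)
    · exact Or.inr (Or.inl (by simp [Fin.ext_iff.mpr h]))
    · exact Or.inr (Or.inr (Or.inr ⟨rfl, h⟩))
  · exact Or.inr (Or.inr (Or.inl h))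

lemma resPos_injective : Function.Injective (resPos : ((k : Fin n) × Fin (m k)) → ℕ) := by
  intro p q h
  rcases lexLT_trichotomy p q with hc | hc | hc
  · exact absurd h (ne_of_lt (resPos_lt_of_lexLT hc))
  · exact hc
  · exact absurd h.symm (ne_of_lt (resPos_lt_of_lexLT hc))

lemma resPos_lt_iff {p q : (k : Fin n) × Fin (m k)} :
    resPos p < resPos q ↔ lexLT p q := by
  constructor
  · intro h
    rcases lexLT_trichotomy p q with hc | hc | hc
    · exact hc
    · subst hc; omega
    · exact absurd (resPos_lt_of_lexLT hc) (by omega)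
  · exact resPos_lt_of_lexLT

/-- the canonical equivalence sending `q` to `resPos q`. -/
noncomputable def resEquiv (m : Fin n → ℕ) : ((k : Fin n) × Fin (m k)) ≃ Fin (∑ k, m k) :=
  Equiv.ofBijective (fun q => ⟨resPos q, resPos_lt q⟩)
    ((Fintype.bijective_iff_injective_and_card _).mpr
      ⟨fun p q h => resPos_injective (by simpa [Fin.ext_iff] using h), by simp⟩)

@[simp] lemma resEquiv_apply (q : (k : Fin n) × Fin (m k)) :
    ((resEquiv m q : Fin (∑ k, m k)) : ℕ) = resPos q := rfl

@[simp] lemma resPos_resEquiv_symm (a : Fin (∑ k, m k)) :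
    resPos ((resEquiv m).symm a) = (a : ℕ) := by
  conv_rhs => rw [← (resEquiv m).apply_symm_apply a]
  rfl

end ResAux
section Part2

open Polynomial Finset ResAux

variable {R : Type*} [CommRing R] {n : ℕ} {m : Fin n → ℕ}

/-- the generic split polynomial -/
noncomputable def rootPoly (γ : (k : Fin n) → Fin (m k) → R) (k : Fin n) : Polynomial R :=
  ∏ i, (X - C (γ k i))

/-- the generic resultant matrix -/
noncomputable def matA (γ : (k : Fin n) → Fin (m k) → R) :
    Matrix ((k : Fin n) × Fin (m k)) ((k : Fin n) × Fin (m k)) R :=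
  fun p q =>
    if (p.2 : ℕ) ≤ resPos q then
      (∏ j ∈ Finset.univ.erase p.1, rootPoly γ j).coeff (resPos q - (p.2 : ℕ))
    else 0

/-- the Vandermonde-type matrix -/
def matV (γ : (k : Fin n) → Fin (m k) → R) :
    Matrix ((k : Fin n) × Fin (m k)) ((k : Fin n) × Fin (m k)) R :=
  fun q p => γ p.1 p.2 ^ resPos q

variable (γ : (k : Fin n) → Fin (m k) → R)

lemma monic_rootPoly (k : Fin n) : (rootPoly γ k).Monic :=
  monic_prod_of_monic _ _ fun i _ => monic_X_sub_C _

lemma natDegree_rootPoly [Nontrivial R] (k : Fin n) : (rootPoly γ k).natDegree = m k := by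
  rw [rootPoly, natDegree_prod_of_monic _ _ fun i _ => monic_X_sub_C _]
  simp

lemma eval_rootPoly (k : Fin n) (x : R) :
    (rootPoly γ k).eval x = ∏ i, (x - γ k i) := by
  simp [rootPoly, eval_prod]

lemma matA_mul_matV [Nontrivial R] (p q : (k : Fin n) × Fin (m k)) :
    (matA γ * matV γ) p q =
      γ q.1 q.2 ^ (p.2 : ℕ) *
        ∏ l ∈ Finset.univ.erase p.1, ∏ i, (γ q.1 q.2 - γ l i) := by
  classical
  set x := γ q.1 q.2 with hx
  set f : Polynomial R := ∏ j ∈ Finset.univ.erase p.1, rootPoly γ j with hfdef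
  set M : ℕ := ∑ k, m k with hM
  have hf : f.natDegree = ∑ j ∈ Finset.univ.erase p.1, m j := by
    rw [hfdef, natDegree_prod_of_monic _ _ fun j _ => monic_rootPoly γ j]
    exact Finset.sum_congr rfl fun j _ => natDegree_rootPoly γ j
  have hsum : m p.1 + ∑ j ∈ Finset.univ.erase p.1, m j = M := by
    rw [hM]; exact Finset.add_sum_erase _ _ (Finset.mem_univ _)
  have hp2 : (p.2 : ℕ) < m p.1 := p.2.isLt
  have hdeg : f.natDegree < M - (p.2 : ℕ) := by omega
  have step1 : (matA γ * matV γ) p q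
      = ∑ t ∈ Finset.range M,
          (if (p.2 : ℕ) ≤ t then f.coeff (t - (p.2 : ℕ)) else 0) * x ^ t := by
    rw [Matrix.mul_apply, ← Fin.sum_univ_eq_sum_range]
    exact Fintype.sum_equiv (resEquiv m)
      (fun r => matA γ p r * matV γ r q)
      (fun t => (if (p.2 : ℕ) ≤ (t : ℕ) then f.coeff ((t : ℕ) - (p.2 : ℕ)) else 0) * x ^ (t : ℕ))
      (fun r => rfl)
  rw [step1]
  have step2 : ∑ t ∈ Finset.range M,
      (if (p.2 : ℕ) ≤ t then f.coeff (t - (p.2 : ℕ)) else 0) * x ^ t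
      = ∑ t ∈ Finset.Ico (p.2 : ℕ) M, f.coeff (t - (p.2 : ℕ)) * x ^ t := by
    simp only [ite_mul, zero_mul]
    rw [← Finset.sum_filter]
    congr 1
    ext t; simp [Finset.mem_Ico, and_comm]
  rw [step2, Finset.sum_Ico_eq_sum_range]
  have step3 : ∀ s ∈ Finset.range (M - (p.2 : ℕ)),
      f.coeff ((p.2 : ℕ) + s - (p.2 : ℕ)) * x ^ ((p.2 : ℕ) + s)
        = x ^ (p.2 : ℕ) * (f.coeff s * x ^ s) := by
    intro s _
    rw [Nat.add_sub_cancel_left, pow_add]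
    ring
  rw [Finset.sum_congr rfl step3, ← Finset.mul_sum, ← eval_eq_sum_range' hdeg]
  congr 1
  rw [hfdef, eval_prod]
  exact Finset.prod_congr rfl fun l _ => eval_rootPoly γ l x

lemma blockTriangular_matA_mul_matV [Nontrivial R] :
    (matA γ * matV γ).BlockTriangular Sigma.fst := by
  intro p q h
  rw [matA_mul_matV]
  have hq : q.1 ∈ Finset.univ.erase p.1 :=
    Finset.mem_erase.mpr ⟨ne_of_lt h, Finset.mem_univ _⟩
  rw [Finset.prod_eq_zero hq (Finset.prod_eq_zero (Finset.mem_univ q.2) (by simp))]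
  ring

end Part2
section Part3

open Polynomial Finset ResAux

variable {R : Type*} [CommRing R] {n : ℕ} {m : Fin n → ℕ}

/-- equivalence between `Fin (m k)` and the `k`-th block of the index type -/
def blockEquiv (m : Fin n → ℕ) (k : Fin n) :
    Fin (m k) ≃ {p : (k' : Fin n) × Fin (m k') // p.1 = k} where
  toFun i := ⟨⟨k, i⟩, rfl⟩
  invFun p := Fin.cast (congrArg m p.2) p.1.2
  left_inv i := rfl
  right_inv p := by rcases p with ⟨⟨k', i⟩, rfl⟩; rfl

variable (γ : (k : Fin n) → Fin (m k) → R)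

lemma det_toSquareBlock [Nontrivial R] (k : Fin n) :
    ((matA γ * matV γ).toSquareBlock Sigma.fst k).det =
      (∏ j, ∏ l ∈ Finset.univ.erase k, ∏ i, (γ k j - γ l i)) *
        ∏ i, ∏ j ∈ Finset.Ioi i, (γ k j - γ k i) := by
  have h1 : (matA γ * matV γ).toSquareBlock Sigma.fst k =
      (Matrix.of fun p j : Fin (m k) =>
        (∏ l ∈ Finset.univ.erase k, ∏ i, (γ k j - γ l i)) *
          (Matrix.vandermonde (γ k)).transpose p j).submatrix
        (blockEquiv m k).symm (blockEquiv m k).symm := by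
    funext p q
    rcases p with ⟨⟨k', i⟩, hp⟩
    rcases q with ⟨⟨k'', i'⟩, hq⟩
    dsimp at hp hq
    subst hp; subst hq
    show (matA γ * matV γ) ⟨k'', i⟩ ⟨k'', i'⟩ = _
    rw [matA_mul_matV]
    show _ = (∏ l ∈ Finset.univ.erase k'', ∏ i, (γ k'' i' - γ l i)) * γ k'' i' ^ (i : ℕ)
    exact mul_comm _ _
  rw [h1, Matrix.det_submatrix_equiv_self, Matrix.det_mul_row, Matrix.det_transpose,
    Matrix.det_vandermonde]

lemma det_AV [Nontrivial R] :
    (matA γ * matV γ).det =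
      ∏ k, ((∏ j, ∏ l ∈ Finset.univ.erase k, ∏ i, (γ k j - γ l i)) *
        ∏ i, ∏ j ∈ Finset.Ioi i, (γ k j - γ k i)) := by
  have hbt := @Matrix.BlockTriangular.det (Fin n) ((k : Fin n) × Fin (m k)) R
    (matA γ * matV γ) Sigma.fst _ _ _ _ _ (blockTriangular_matA_mul_matV γ)
  rw [hbt]
  have hext : ∏ a ∈ Finset.image (Sigma.fst : ((k : Fin n) × Fin (m k)) → Fin n) Finset.univ,
      ((matA γ * matV γ).toSquareBlock Sigma.fst a).det
      = ∏ a, ((matA γ * matV γ).toSquareBlock Sigma.fst a).det := by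
    apply Finset.prod_subset (Finset.subset_univ _)
    intro k _ hk
    haveI : IsEmpty {p : (k' : Fin n) × Fin (m k') // p.1 = k} :=
      ⟨fun p => hk (Finset.mem_image.mpr ⟨p.1, Finset.mem_univ _, p.2⟩)⟩
    exact Matrix.det_isEmpty
  rw [hext]
  exact Finset.prod_congr rfl fun k _ => det_toSquareBlock γ k

end Part3
section Part4

open Polynomial Finset ResAux

variable {R : Type*} [CommRing R] {n : ℕ} {m : Fin n → ℕ}

lemma prod_sigma_univ (f : ((k : Fin n) × Fin (m k)) → R) :
    ∏ p, f p = ∏ k, ∏ i, f ⟨k, i⟩ := by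
  rw [← Finset.univ_sigma_univ, Finset.prod_sigma]

lemma prod_Ioi_equiv (F : ((k : Fin n) × Fin (m k)) → ((k : Fin n) × Fin (m k)) → R) :
    (∏ a : Fin (∑ k, m k), ∏ b ∈ Finset.Ioi a,
      F ((resEquiv m).symm a) ((resEquiv m).symm b))
    = ∏ p : (k : Fin n) × Fin (m k), ∏ q : (k : Fin n) × Fin (m k),
        if lexLT p q then F p q else 1 := by
  have h1 : ∀ a : Fin (∑ k, m k),
      ∏ b ∈ Finset.Ioi a, F ((resEquiv m).symm a) ((resEquiv m).symm b)
      = ∏ b, if a < b then F ((resEquiv m).symm a) ((resEquiv m).symm b) else 1 := by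
    intro a
    rw [← Finset.prod_filter]
    congr 1
    ext b; simp
  rw [Finset.prod_congr rfl fun a _ => h1 a]
  symm
  apply Fintype.prod_equiv (resEquiv m)
  intro p
  apply Fintype.prod_equiv (resEquiv m)
  intro q
  have hc : (resEquiv m p < resEquiv m q) ↔ lexLT p q := by
    rw [Fin.lt_def]; exact resPos_lt_iff
  rw [Equiv.symm_apply_apply, Equiv.symm_apply_apply]
  exact if_congr hc.symm rfl rfl

variable (γ : (k : Fin n) → Fin (m k) → R)

lemma det_matV :
    (matV γ).det = ∏ p : (k : Fin n) × Fin (m k), ∏ q : (k : Fin n) × Fin (m k),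
      if lexLT p q then (γ q.1 q.2 - γ p.1 p.2) else 1 := by
  set w : Fin (∑ k, m k) → R :=
    fun t => γ ((resEquiv m).symm t).1 ((resEquiv m).symm t).2 with hw
  have h1 : matV γ = ((Matrix.vandermonde w).transpose).submatrix
      (resEquiv m) (resEquiv m) := by
    funext q p
    have hp : (resEquiv m).symm ((resEquiv m) p) = p := Equiv.symm_apply_apply _ _
    show γ p.1 p.2 ^ resPos q
        = (fun x : (k : Fin n) × Fin (m k) => γ x.1 x.2)
            ((resEquiv m).symm ((resEquiv m) p)) ^ (((resEquiv m) q : Fin (∑ k, m k)) : ℕ)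
    rw [hp]
    rfl
  rw [h1, Matrix.det_submatrix_equiv_self, Matrix.det_transpose, Matrix.det_vandermonde]
  exact prod_Ioi_equiv fun p q => γ q.1 q.2 - γ p.1 p.2

lemma pair_prod_step (k : Fin n) (i : Fin (m k)) :
    (∏ l, ∏ j, if lexLT ⟨k, i⟩ ⟨l, j⟩ then (γ l j - γ k i) else 1)
    = (∏ j ∈ Finset.Ioi i, (γ k j - γ k i)) *
        ∏ l ∈ Finset.Ioi k, ∏ j, (γ l j - γ k i) := by
  rw [← Finset.mul_prod_erase Finset.univ _ (Finset.mem_univ k)]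
  congr 1
  · have hc : ∀ j : Fin (m k), lexLT ⟨k, i⟩ ⟨k, j⟩ ↔ i < j := by
      intro j
      unfold lexLT
      constructor
      · rintro (h | ⟨-, h⟩)
        · exact absurd h (lt_irrefl k)
        · exact h
      · exact fun h => Or.inr ⟨rfl, h⟩
    rw [Finset.prod_congr rfl fun j _ => if_congr (hc j) rfl rfl, ← Finset.prod_filter]
    congr 1
    ext j; simp
  · have step : ∀ l ∈ Finset.univ.erase k,
        (∏ j, if lexLT ⟨k, i⟩ ⟨l, j⟩ then (γ l j - γ k i) else 1)
        = if k < l then (∏ j, (γ l j - γ k i)) else 1 := by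
      intro l hl
      have hlk : l ≠ k := (Finset.mem_erase.mp hl).1
      have hc : ∀ j : Fin (m l), lexLT ⟨k, i⟩ ⟨l, j⟩ ↔ k < l := by
        intro j
        constructor
        · rintro (h | ⟨h, -⟩)
          · exact h
          · exact absurd h.symm hlk
        · exact fun h => Or.inl h
      by_cases h : k < l
      · simp only [if_pos h]
        exact Finset.prod_congr rfl fun j _ => by rw [if_pos ((hc j).mpr h)]
      · simp only [if_neg h]
        exact Finset.prod_eq_one fun j _ => by rw [if_neg (fun hx => h ((hc j).mp hx))]
    rw [Finset.prod_congr rfl step, ← Finset.prod_filter]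
    congr 1
    ext l
    simp only [Finset.mem_filter, Finset.mem_erase, Finset.mem_univ, true_and, and_true,
      Finset.mem_Ioi]
    constructor
    · exact fun h => h.2
    · exact fun h => ⟨(ne_of_lt h).symm, h⟩

lemma pair_prod :
    (∏ p : (k : Fin n) × Fin (m k), ∏ q : (k : Fin n) × Fin (m k),
      if lexLT p q then (γ q.1 q.2 - γ p.1 p.2) else 1)
    = (∏ k, ∏ i, ∏ j ∈ Finset.Ioi i, (γ k j - γ k i)) *
        ∏ k, ∏ l ∈ Finset.Ioi k, ∏ i, ∏ j, (γ l j - γ k i) := by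
  rw [prod_sigma_univ]
  have h1 : ∀ (k : Fin n) (i : Fin (m k)),
      (∏ q : (k' : Fin n) × Fin (m k'),
        if lexLT ⟨k, i⟩ q then (γ q.1 q.2 - γ k i) else 1)
      = (∏ j ∈ Finset.Ioi i, (γ k j - γ k i)) *
          ∏ l ∈ Finset.Ioi k, ∏ j, (γ l j - γ k i) := by
    intro k i
    rw [prod_sigma_univ]
    exact pair_prod_step γ k i
  calc ∏ k, ∏ i, ∏ q : (k' : Fin n) × Fin (m k'),
        (if lexLT ⟨k, i⟩ q then (γ q.1 q.2 - γ k i) else 1)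
      = ∏ k, ∏ i, ((∏ j ∈ Finset.Ioi i, (γ k j - γ k i)) *
          ∏ l ∈ Finset.Ioi k, ∏ j, (γ l j - γ k i)) :=
        Finset.prod_congr rfl fun k _ => Finset.prod_congr rfl fun i _ => h1 k i
    _ = (∏ k, ∏ i, ∏ j ∈ Finset.Ioi i, (γ k j - γ k i)) *
          ∏ k, ∏ i, ∏ l ∈ Finset.Ioi k, ∏ j, (γ l j - γ k i) := by
        rw [← Finset.prod_mul_distrib]
        exact Finset.prod_congr rfl fun k _ => Finset.prod_mul_distrib
    _ = _ := by
        congr 1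
        exact Finset.prod_congr rfl fun k _ => Finset.prod_comm

end Part4
section Part5

open Polynomial Finset ResAux

variable {R : Type*} [CommRing R] {n : ℕ} {m : Fin n → ℕ} (γ : (k : Fin n) → Fin (m k) → R)

lemma cross_reorg :
    (∏ k, ∏ j, ∏ l ∈ Finset.univ.erase k, ∏ i, (γ k j - γ l i))
    = (∏ k, ∏ l ∈ Finset.Ioi k, ∏ i, ∏ j, (γ k i - γ l j)) *
        ∏ k, ∏ l ∈ Finset.Ioi k, ∏ i, ∏ j, (γ l j - γ k i) := by
  have h1 : ∀ k : Fin n, (∏ j, ∏ l ∈ Finset.univ.erase k, ∏ i, (γ k j - γ l i))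
      = ∏ l ∈ Finset.univ.erase k, ∏ j, ∏ i, (γ k j - γ l i) :=
    fun k => Finset.prod_comm
  rw [Finset.prod_congr rfl fun k _ => h1 k]
  have herase : ∀ k : Fin n, Finset.univ.erase k = Finset.Iio k ∪ Finset.Ioi k := by
    intro k
    ext l
    simp only [Finset.mem_erase, Finset.mem_univ, and_true, Finset.mem_union, Finset.mem_Iio,
      Finset.mem_Ioi]
    exact ne_iff_lt_or_gt
  have hdis : ∀ k : Fin n, Disjoint (Finset.Iio k) (Finset.Ioi k) := by
    intro k
    rw [Finset.disjoint_left]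
    intro a ha hb
    exact absurd (Finset.mem_Ioi.mp hb) (not_lt.mpr (le_of_lt (Finset.mem_Iio.mp ha)))
  have h2 : ∀ k : Fin n, (∏ l ∈ Finset.univ.erase k, ∏ j, ∏ i, (γ k j - γ l i))
      = (∏ l ∈ Finset.Iio k, ∏ j, ∏ i, (γ k j - γ l i)) *
          ∏ l ∈ Finset.Ioi k, ∏ j, ∏ i, (γ k j - γ l i) := by
    intro k
    rw [herase k, Finset.prod_union (hdis k)]
  rw [Finset.prod_congr rfl fun k _ => h2 k, Finset.prod_mul_distrib]
  have h3 : (∏ k, ∏ l ∈ Finset.Iio k, ∏ j, ∏ i, (γ k j - γ l i))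
      = ∏ k, ∏ l ∈ Finset.Ioi k, ∏ j, ∏ i, (γ l j - γ k i) := by
    apply Finset.prod_comm'
    intro x y
    simp only [Finset.mem_univ, Finset.mem_Iio, Finset.mem_Ioi, true_and, and_true]
  rw [h3]
  have h4 : (∏ k, ∏ l ∈ Finset.Ioi k, ∏ j, ∏ i, (γ l j - γ k i))
      = ∏ k, ∏ l ∈ Finset.Ioi k, ∏ i, ∏ j, (γ l j - γ k i) :=
    Finset.prod_congr rfl fun k _ => Finset.prod_congr rfl fun l _ => Finset.prod_comm
  rw [h4, mul_comm]

lemma det_matA_of_injective {R : Type*} [CommRing R] [IsDomain R]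
    (γ : (k : Fin n) → Fin (m k) → R)
    (hinj : Function.Injective fun q : (k : Fin n) × Fin (m k) => γ q.1 q.2) :
    (matA γ).det = ∏ k, ∏ l ∈ Finset.Ioi k, ∏ i, ∏ j, (γ k i - γ l j) := by
  have hV : (matV γ).det ≠ 0 := by
    rw [det_matV, Finset.prod_ne_zero_iff]
    intro p _
    rw [Finset.prod_ne_zero_iff]
    intro q _
    by_cases h : lexLT p q
    · rw [if_pos h]
      refine sub_ne_zero.mpr fun hEq => ?_
      have hpq : q = p := hinj hEq
      exact absurd (resPos_lt_of_lexLT (hpq ▸ h)) (lt_irrefl _)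
    · rw [if_neg h]; exact one_ne_zero
  apply mul_right_cancel₀ hV
  rw [← Matrix.det_mul, det_AV γ]
  conv_rhs => rw [det_matV γ, pair_prod γ]
  rw [Finset.prod_mul_distrib, cross_reorg γ]
  ring

lemma matA_map {R T : Type*} [CommRing R] [CommRing T] (φ : R →+* T)
    (γ : (k : Fin n) → Fin (m k) → R) :
    (matA γ).map φ = matA fun k i => φ (γ k i) := by
  funext p q
  show φ (matA γ p q) = _
  rw [matA, matA, apply_ite φ, map_zero]
  congr 1
  rw [← Polynomial.coeff_map]
  congr 1
  rw [Polynomial.map_prod]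
  refine Finset.prod_congr rfl fun l _ => ?_
  rw [rootPoly, rootPoly, Polynomial.map_prod]
  refine Finset.prod_congr rfl fun i _ => ?_
  rw [Polynomial.map_sub, Polynomial.map_X, Polynomial.map_C]

lemma det_matA {R : Type*} [CommRing R] (γ : (k : Fin n) → Fin (m k) → R) :
    (matA γ).det = ∏ k, ∏ l ∈ Finset.Ioi k, ∏ i, ∏ j, (γ k i - γ l j) := by
  have hinj : Function.Injective fun q : (k : Fin n) × Fin (m k) =>
      (fun (k : Fin n) (i : Fin (m k)) =>
        (MvPolynomial.X ⟨k, i⟩ : MvPolynomial ((k : Fin n) × Fin (m k)) ℤ)) q.1 q.2 :=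
    fun p q h => MvPolynomial.X_injective h
  have h0 := det_matA_of_injective
    (fun (k : Fin n) (i : Fin (m k)) =>
      (MvPolynomial.X ⟨k, i⟩ : MvPolynomial ((k : Fin n) × Fin (m k)) ℤ)) hinj
  have h1 := congrArg (MvPolynomial.eval₂Hom (Int.castRingHom R) (fun q => γ q.1 q.2)) h0
  rw [RingHom.map_det, RingHom.mapMatrix_apply, matA_map] at h1
  simp only [map_prod, map_sub, MvPolynomial.eval₂Hom_X'] at h1
  exact h1

end Part5
open Polynomial Finset ResAux in
/-- **Root-product formula for the generalized resultant.**
If `S` is an integral domain with fraction field `K`, `L` a splitting field over `K` of the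
product of the monic polynomials `g_(1), …, g_(n)`, and `g_(k) = ∏_i (X - C (γ k i))` in `L[X]`,
then `Res(g_(1), …, g_(n)) = ∏_{k<ℓ} ∏_{i,j} (γ_(k)i − γ_(ℓ)j)`. -/
theorem resultant_eq_prod_root_differences
    {S : Type*} [CommRing S] [IsDomain S]
    (K L : Type*) [Field K] [Field L] [Algebra S K] [IsFractionRing S K]
    [Algebra K L] [Algebra S L] [IsScalarTower S K L]
    {n : ℕ} (g : Fin n → Polynomial S)
    (hmonic : ∀ k, (g k).Monic)
    (hdeg : ∀ k, 1 ≤ (g k).natDegree)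
    [Polynomial.IsSplittingField K L ((∏ k, g k).map (algebraMap S K))]
    (γ : (k : Fin n) → Fin ((g k).natDegree) → L)
    (hroots : ∀ k, (g k).map (algebraMap S L) = ∏ i, (X - C (γ k i))) :
    algebraMap S L (genRes g) =
      ∏ k, ∏ l ∈ Finset.Ioi k, ∏ i, ∏ j, (γ k i - γ l j) := by
  have hmap : (algebraMap S L) (genRes g) = (matA γ).det := by
    rw [genRes, RingHom.map_det, RingHom.mapMatrix_apply]
    congr 1
    funext p q
    show (algebraMap S L) (resMatrix g p q) = matA γ p q
    rw [resMatrix, matA, apply_ite (algebraMap S L), map_zero]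
    congr 1
    rw [← Polynomial.coeff_map, Polynomial.map_prod]
    congr 1
    refine Finset.prod_congr rfl fun l _ => ?_
    rw [hroots l, rootPoly]
  rw [hmap, det_matA]
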